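/- For every k ∈ ℂ with Im k > 0 and every x ∈ ℝ, the function t ↦ e^{itx}/(t² − k²) is Lebesgue integrable on ℝ and (1/(2π)) ∫_ℝ e^{itx}/(t² − k²) dt = i·e^{ik|x|}/(2k). -/

import Mathlib

open Complex MeasureTheory Real Set Filter Topology
open scoped FourierTransform

namespace FreeResolventAux


lemma exp_int {c : ℂ} (hc : c.re < 0) :
    IntegrableOn (fun y : ℝ => Complex.exp (c * y)) (Ioi 0) ∧
      ∫ y in Ioi (0:ℝ), Complex.exp (c * y) = -c⁻¹ := by
  have hc0 : c ≠ 0 := fun h => by simp [h] at hc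
  have hnorm : ∀ y : ℝ, ‖Complex.exp (c * y)‖ = Real.exp (-(-c.re) * y) := by
    intro y
    rw [Complex.norm_exp]
    norm_num [Complex.mul_re]
  have hint : IntegrableOn (fun y : ℝ => Complex.exp (c * y)) (Ioi 0) := by
    refine (exp_neg_integrableOn_Ioi 0 (by linarith : (0:ℝ) < -c.re)).mono'
      ((Complex.continuous_exp.comp (continuous_const.mul
        Complex.continuous_ofReal)).aestronglyMeasurable) ?_
    exact Filter.Eventually.of_forall fun y => le_of_eq (hnorm y)
  have hderiv : ∀ y : ℝ, HasDerivAt (fun y : ℝ => c⁻¹ * Complex.exp (c * y))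
      (Complex.exp (c * y)) y := by
    intro y
    have h1 : HasDerivAt (fun y : ℝ => c * (y : ℂ)) c y := by
      simpa using ((hasDerivAt_id y).ofReal_comp.const_mul c)
    have h2 := (h1.cexp).const_mul c⁻¹
    rw [mul_comm (Complex.exp _) c, inv_mul_cancel_left₀ hc0] at h2
    exact h2
  have htend : Tendsto (fun y : ℝ => c⁻¹ * Complex.exp (c * y)) atTop (𝓝 0) := by
    have h0 : Tendsto (fun y : ℝ => Complex.exp (c * y)) atTop (𝓝 0) := by
      rw [tendsto_zero_iff_norm_tendsto_zero]
      have h2 : Tendsto (fun y : ℝ => Real.exp (-((-c.re) * y))) atTop (𝓝 0) :=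
        Real.tendsto_exp_neg_atTop_nhds_zero.comp (tendsto_id.const_mul_atTop (by linarith))
      refine h2.congr fun y => ?_
      rw [hnorm y]; ring_nf
    simpa using h0.const_mul c⁻¹
  refine ⟨hint, ?_⟩
  have := integral_Ioi_of_hasDerivAt_of_tendsto' (fun y _ => hderiv y) hint htend
  simpa using this


lemma denom_ne {k : ℂ} (hk : 0 < k.im) (t : ℝ) : ((t:ℂ)^2 - k^2) ≠ 0 := by
  have h1 : (t:ℂ) + k ≠ 0 := by
    intro h
    have := congrArg Complex.im h
    simp at this
    linarith
  have h2 : (t:ℂ) - k ≠ 0 := by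
    intro h
    have := congrArg Complex.im h
    simp at this
    linarith
  rw [sq_sub_sq]
  exact mul_ne_zero h1 h2

lemma denom_bound {k : ℂ} (hk : 0 < k.im) :
    ∃ C : ℝ, 0 < C ∧ ∀ t : ℝ, 1 + t^2 ≤ C * ‖(t:ℂ)^2 - k^2‖ := by
  set b := k.im with hb_def
  set r := ‖k‖ with hr_def
  have hb : 0 < b := hk
  have hbr : b ≤ r := by
    have := Complex.abs_im_le_norm k
    rw [abs_of_pos hb] at this
    simpa using this
  refine ⟨(1 + 4*r^2 + 4*b^2)/b^2, by positivity, fun t => ?_⟩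
  have hsplit : ‖(t:ℂ)^2 - k^2‖ = ‖(t:ℂ)+k‖ * ‖(t:ℂ)-k‖ := by
    rw [sq_sub_sq, norm_mul]
  set P := ‖(t:ℂ)+k‖ with hP_def
  set Q := ‖(t:ℂ)-k‖ with hQ_def
  have h1 : b ≤ P := by
    have := Complex.abs_im_le_norm ((t:ℂ)+k)
    simpa [← hb_def, abs_of_pos hb] using this
  have h2 : b ≤ Q := by
    have := Complex.abs_im_le_norm ((t:ℂ)-k)
    simpa [← hb_def, abs_of_pos hb, abs_of_neg (neg_neg_iff_pos.mpr hb)] using this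
  have h3 : |t| - r ≤ P := by
    have := norm_sub_norm_le (t:ℂ) (-k)
    simpa [sub_neg_eq_add, Complex.norm_real] using this
  have h4 : |t| - r ≤ Q := by
    have := norm_sub_norm_le (t:ℂ) k
    simpa [Complex.norm_real] using this
  have hPQb : b * b ≤ P * Q := mul_le_mul h1 h2 hb.le (hb.le.trans h1)
  rw [hsplit, div_mul_eq_mul_div, le_div_iff₀ (by positivity : (0:ℝ) < b^2)]
  have habs : |t|^2 = t^2 := sq_abs t
  rcases le_or_gt |t| (2*r) with hcase | hcase
  · have ht2 : t^2 ≤ 4*r^2 := by nlinarith [abs_nonneg t]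
    nlinarith [hPQb, mul_nonneg (norm_nonneg ((t:ℂ)+k)) (norm_nonneg ((t:ℂ)-k))]
  · have hP2 : |t|/2 ≤ P := by linarith [h3, hbr]
    have hQ2 : |t|/2 ≤ Q := by linarith [h4, hbr]
    have haPQ : (|t|/2) * (|t|/2) ≤ P * Q :=
      mul_le_mul hP2 hQ2 (by positivity) ((by positivity : (0:ℝ) ≤ |t|/2).trans hP2)
    nlinarith [hPQb, haPQ, sq_nonneg b, sq_nonneg r, mul_pos hb hb]

lemma integrable_kernel {k : ℂ} (hk : 0 < k.im) {φ : ℝ → ℂ} (hφ : Continuous φ)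
    (hφ1 : ∀ t, ‖φ t‖ ≤ 1) :
    Integrable (fun t : ℝ => φ t / ((t:ℂ)^2 - k^2)) := by
  obtain ⟨C, hC, hCb⟩ := denom_bound hk
  have hcont : Continuous fun t : ℝ => φ t / ((t:ℂ)^2 - k^2) := by
    apply hφ.div
    · continuity
    · exact fun t => denom_ne hk t
  refine ((integrable_inv_one_add_sq).const_mul C).mono' hcont.aestronglyMeasurable ?_
  refine Filter.Eventually.of_forall fun t => ?_
  have hd : 0 < ‖(t:ℂ)^2 - k^2‖ := norm_pos_iff.mpr (denom_ne hk t)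
  have h2 : (0:ℝ) < 1 + t^2 := by positivity
  have key : 1 + t^2 ≤ C * ‖(t:ℂ)^2 - k^2‖ := hCb t
  rw [norm_div, div_le_iff₀ hd, mul_comm C, mul_assoc]
  refine (hφ1 t).trans ?_
  rw [inv_mul_eq_div, le_div_iff₀ h2]
  linarith



lemma integrable_cexp_abs {c : ℂ} (hc : c.re < 0) :
    Integrable (fun y : ℝ => Complex.exp (c * |y|)) := by
  set f : ℝ → ℂ := fun y => Complex.exp (c * |y|) with hf
  have hIoi : IntegrableOn f (Ioi 0) :=
    ((exp_int hc).1).congr_fun (fun y hy => by simp [hf, abs_of_pos (mem_Ioi.mp hy)])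
      measurableSet_Ioi
  have hIci : IntegrableOn f (Ici 0) := (integrableOn_Ici_iff_integrableOn_Ioi (b := 0)).2 hIoi
  have hF : Integrable ((Ici (0:ℝ)).indicator f) :=
    (integrable_indicator_iff measurableSet_Ici).2 hIci
  have hFn : Integrable (fun y : ℝ => (Ici (0:ℝ)).indicator f (-y)) := hF.comp_neg
  have heq : (fun y : ℝ => (Ici (0:ℝ)).indicator f (-y)) = (Iic (0:ℝ)).indicator f := by
    ext y
    by_cases h : y ≤ 0
    · rw [Set.indicator_of_mem (by simpa using h), Set.indicator_of_mem (by simpa using h)]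
      simp [hf, abs_neg]
    · rw [Set.indicator_of_notMem (by simpa using h), Set.indicator_of_notMem (by simpa using h)]
  have hIic : IntegrableOn f (Iic 0) := by
    rw [← integrable_indicator_iff measurableSet_Iic, ← heq]
    exact hFn
  rw [← integrableOn_univ, ← Set.Iic_union_Ioi (a := (0:ℝ)), integrableOn_union]
  exact ⟨hIic, hIoi⟩





lemma fourier_g {k : ℂ} (hk : 0 < k.im) (ξ : ℝ) :
    𝓕 (fun y : ℝ => Complex.I * Complex.exp (Complex.I * k * |y|) / (2*k)) ξ
      = (((2*π*ξ : ℝ) : ℂ)^2 - k^2)⁻¹ := by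
  have hk0 : k ≠ 0 := by intro h; rw [h] at hk; simp at hk
  set a : ℂ := ((2*π*ξ : ℝ) : ℂ) with ha
  set c₁ : ℂ := Complex.I * (k - a) with hc1
  set c₂ : ℂ := Complex.I * (k + a) with hc2
  have hc1re : c₁.re < 0 := by
    simp only [hc1, ha, Complex.mul_re, Complex.I_re, Complex.I_im, Complex.sub_im,
      Complex.ofReal_im, Complex.sub_re]
    simpa using hk
  have hc2re : c₂.re < 0 := by
    simp only [hc2, ha, Complex.mul_re, Complex.I_re, Complex.I_im, Complex.add_im,
      Complex.ofReal_im, Complex.add_re]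
    simpa using hk
  have hIkre : (Complex.I * k).re < 0 := by
    simp only [Complex.mul_re, Complex.I_re, Complex.I_im]
    simpa using hk
  set m : ℝ → ℂ := fun v =>
    Complex.exp (((-2 * π * v * ξ : ℝ) : ℂ) * Complex.I) *
      (Complex.I * Complex.exp (Complex.I * k * |v|) / (2*k)) with hm
  have hf_int : Integrable (fun y : ℝ => Complex.I * Complex.exp (Complex.I * k * |y|) / (2*k)) := by
    have := (integrable_cexp_abs hIkre).const_mul Complex.I
    simpa [mul_div_assoc] using this.div_const (2*k)
  have hm_int : Integrable m := by
    refine hf_int.bdd_mul (c := 1) ?_ (Filter.Eventually.of_forall fun v => ?_)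
    · exact (Complex.continuous_exp.comp
        ((Complex.continuous_ofReal.comp (by continuity)).mul continuous_const)).aestronglyMeasurable
    · rw [Complex.norm_exp]
      simp [Complex.mul_re]
  have hsplit : ∫ v : ℝ, m v = (∫ v in Iic (0:ℝ), m v) + ∫ v in Ioi (0:ℝ), m v :=
    (intervalIntegral.integral_Iic_add_Ioi hm_int.integrableOn hm_int.integrableOn).symm
  have hIoi : ∫ v in Ioi (0:ℝ), m v = Complex.I / (2*k) * (-c₁⁻¹) := by
    rw [setIntegral_congr_fun measurableSet_Ioi
      (g := fun v : ℝ => Complex.I / (2*k) * Complex.exp (c₁ * v)) ?_]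
    · rw [integral_const_mul, (exp_int hc1re).2]
    · intro v hv
      simp only [hm]
      rw [abs_of_pos (mem_Ioi.mp hv),
        show c₁ * v = ((-2 * π * v * ξ : ℝ) : ℂ) * Complex.I + Complex.I * k * v by
          rw [hc1, ha]; push_cast; ring,
        Complex.exp_add]
      ring
  have hIic : ∫ v in Iic (0:ℝ), m v = Complex.I / (2*k) * (-c₂⁻¹) := by
    have h0 : ∫ v in Iic (0:ℝ), m v = ∫ v in Ioi (0:ℝ), m (-v) := by
      rw [integral_comp_neg_Ioi]; norm_num
    rw [h0, setIntegral_congr_fun measurableSet_Ioi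
      (g := fun v : ℝ => Complex.I / (2*k) * Complex.exp (c₂ * v)) ?_]
    · rw [integral_const_mul, (exp_int hc2re).2]
    · intro v hv
      simp only [hm]
      rw [abs_neg, abs_of_pos (mem_Ioi.mp hv),
        show c₂ * v = ((-2 * π * (-v) * ξ : ℝ) : ℂ) * Complex.I + Complex.I * k * v by
          rw [hc2, ha]; push_cast; ring,
        Complex.exp_add]
      ring
  have hrw : 𝓕 (fun y : ℝ => Complex.I * Complex.exp (Complex.I * k * |y|) / (2*k)) ξ
      = ∫ v : ℝ, m v := by
    rw [Real.fourier_real_eq_integral_exp_smul]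
    simp_rw [hm, smul_eq_mul]
  rw [hrw, hsplit, hIic, hIoi]
  have hden : a^2 - k^2 ≠ 0 := by rw [ha]; exact denom_ne hk _
  have hma : k - a ≠ 0 := by
    intro h
    have := congrArg Complex.im h
    simp [ha] at this
    linarith
  have hpa : k + a ≠ 0 := by
    intro h
    have := congrArg Complex.im h
    simp [ha] at this
    linarith
  have hc10 : c₁ ≠ 0 := mul_ne_zero Complex.I_ne_zero hma
  have hc20 : c₂ ≠ 0 := mul_ne_zero Complex.I_ne_zero hpa
  rw [hc1, hc2]
  field_simp
  ring_nf

end FreeResolventAux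

open FreeResolventAux

/-- For every `k ∈ ℂ` with `Im k > 0` and every `x ∈ ℝ`, the function
`t ↦ e^{itx}/(t² − k²)` is Lebesgue integrable on `ℝ` and
`(1/(2π)) ∫_ℝ e^{itx}/(t² − k²) dt = i e^{ik|x|}/(2k)`. -/
theorem freeResolvent_kernel_secondOrder (k : ℂ) (hk : 0 < k.im) (x : ℝ) :
    Integrable (fun t : ℝ => Complex.exp (Complex.I * t * x) / ((t : ℂ) ^ 2 - k ^ 2)) ∧
    (1 / (2 * (Real.pi : ℂ))) *
        ∫ t : ℝ, Complex.exp (Complex.I * t * x) / ((t : ℂ) ^ 2 - k ^ 2)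
      = Complex.I * Complex.exp (Complex.I * k * |x|) / (2 * k) := by
  have hk0 : k ≠ 0 := by intro h; rw [h] at hk; simp at hk
  have h2pi : (2 * π : ℝ) ≠ 0 := by positivity
  have hφcont : Continuous fun t : ℝ => Complex.exp (Complex.I * t * x) := by
    apply Complex.continuous_exp.comp
    continuity
  have hφ1 : ∀ t : ℝ, ‖Complex.exp (Complex.I * t * x)‖ ≤ 1 := by
    intro t
    rw [Complex.norm_exp]
    simp [Complex.mul_re, Complex.mul_im]
  have hInt : Integrable (fun t : ℝ => Complex.exp (Complex.I * t * x) / ((t : ℂ)^2 - k^2)) :=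
    integrable_kernel hk hφcont hφ1
  refine ⟨hInt, ?_⟩
  set g : ℝ → ℂ := fun y => Complex.I * Complex.exp (Complex.I * k * |y|) / (2*k) with hg
  have hIkre : (Complex.I * k).re < 0 := by
    simp only [Complex.mul_re, Complex.I_re, Complex.I_im]
    simpa using hk
  have hg_int : Integrable g := by
    have := (integrable_cexp_abs hIkre).const_mul Complex.I
    simpa [hg, mul_div_assoc] using this.div_const (2*k)
  have hg_cont : Continuous g := by
    apply Continuous.div_const
    apply continuous_const.mul
    apply Complex.continuous_exp.comp
    exact continuous_const.mul (Complex.continuous_ofReal.comp continuous_abs)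
  have hFg_int : Integrable (𝓕 g) := by
    have h1 : Integrable (fun t : ℝ => (1:ℂ) / ((t:ℂ)^2 - k^2)) :=
      integrable_kernel hk continuous_const (by simp)
    have h2 := h1.comp_mul_left' (R := 2*π) h2pi
    refine (h2.congr (Filter.Eventually.of_forall fun ξ => ?_))
    rw [fourier_g hk ξ]
    push_cast
    rw [one_div]
  have hinv : 𝓕⁻ (𝓕 g) x = g x := hg_int.fourierInv_fourier_eq hFg_int hg_cont.continuousAt
  set F : ℝ → ℂ := fun t => Complex.exp (Complex.I * t * x) / ((t : ℂ)^2 - k^2) with hF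
  have hcomp : 𝓕⁻ (𝓕 g) x = ∫ ξ : ℝ, F (2 * π * ξ) := by
    rw [Real.fourierInv_eq_fourier_neg,
      Real.fourier_real_eq_integral_exp_smul]
    refine integral_congr_ae (Filter.Eventually.of_forall fun ξ => ?_)
    show Complex.exp (((-2*π*ξ*(-x) : ℝ) : ℂ) * Complex.I) • 𝓕 g ξ = F (2*π*ξ)
    rw [hg, fourier_g hk ξ, smul_eq_mul, hF]
    rw [show ((-2*π*ξ*(-x) : ℝ) : ℂ) * Complex.I
        = Complex.I * ((2*π*ξ : ℝ) : ℂ) * (x : ℂ) by push_cast; ring]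
    simp only [div_eq_mul_inv]
  have hsub : ∫ ξ : ℝ, F (2 * π * ξ) = |(2*π:ℝ)⁻¹| • ∫ t : ℝ, F t :=
    Measure.integral_comp_mul_left F (2*π)
  have habs : |(2*π:ℝ)⁻¹| = (2*π:ℝ)⁻¹ := abs_of_pos (by positivity)
  calc (1 / (2 * (Real.pi : ℂ))) * ∫ t : ℝ, F t
      = (((2*π:ℝ)⁻¹ : ℝ) : ℂ) * ∫ t : ℝ, F t := by
        norm_num [Complex.ofReal_inv]
    _ = ((2*π:ℝ)⁻¹ : ℝ) • ∫ t : ℝ, F t := Complex.real_smul.symm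
    _ = ∫ ξ : ℝ, F (2 * π * ξ) := by rw [hsub, habs]
    _ = g x := by rw [← hcomp, hinv]
    _ = Complex.I * Complex.exp (Complex.I * k * |x|) / (2 * k) := rfl
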